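/- For every positive integer n there exists a constant C > 0 such that for every v ∈ ℝⁿ and every w ∈ ℝⁿ with |w| ≤ 1/4: ∫_{B₂(0) \ B_{1/2}(0)} |arctan(v·(ξ+w)) − arctan(v·ξ)| dξ ≤ C |w|, where the integral is over the annulus {ξ ∈ ℝⁿ : 1/2 < |ξ| < 2} with respect to Lebesgue measure. -/

import Mathlib

open MeasureTheory Real

theorem cauchy_int (a u : ℝ) (ha : 0 < a) :
    (∫ y : ℝ, (1 + (a * y + u) ^ 2)⁻¹) = π / a := by
  have h1 : (∫ y : ℝ, (1 + (a * y + u) ^ 2)⁻¹)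
      = |a⁻¹| • ∫ y : ℝ, (1 + (y + u) ^ 2)⁻¹ :=
    Measure.integral_comp_mul_left (fun y => (1 + (y + u) ^ 2)⁻¹) a
  rw [h1, integral_add_right_eq_self (fun y => (1 + y ^ 2)⁻¹) u,
    integral_univ_inv_one_add_sq, abs_of_pos (inv_pos.mpr ha), smul_eq_mul,
    inv_mul_eq_div]

theorem cauchy_integrable (a u : ℝ) (ha : a ≠ 0) :
    Integrable (fun y : ℝ => (1 + (a * y + u) ^ 2)⁻¹) :=
  ((integrable_inv_one_add_sq).comp_add_right u).comp_mul_left' ha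

theorem ptwise (s h : ℝ) :
    |arctan (s + h) - arctan s| ≤ ∫ t in Set.uIoc 0 h, (1 + (s + t) ^ 2)⁻¹ := by
  have e1 : (∫ t in (0:ℝ)..h, (1 + (t + s) ^ 2)⁻¹) = arctan (s + h) - arctan s := by
    rw [intervalIntegral.integral_comp_add_right (fun x => (1 + x ^ 2)⁻¹) s,
      integral_inv_one_add_sq]
    ring_nf
  calc |arctan (s + h) - arctan s| = ‖∫ t in (0:ℝ)..h, (1 + (t + s) ^ 2)⁻¹‖ := by
        rw [e1]; rfl
    _ ≤ ∫ t in Set.uIoc 0 h, ‖(1 + (t + s) ^ 2)⁻¹‖ :=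
        intervalIntegral.norm_integral_le_integral_norm_uIoc
    _ = ∫ t in Set.uIoc 0 h, (1 + (s + t) ^ 2)⁻¹ := by
        congr 1; ext t
        rw [Real.norm_eq_abs, abs_of_nonneg (by positivity), add_comm t s]

theorem oneD (a h : ℝ) (ha : 0 < a) :
    (∫ y in Set.Ioo (-2:ℝ) 2, |arctan (a * y + h) - arctan (a * y)|)
      ≤ π * |h| / a := by
  set μ1 := volume.restrict (Set.Ioo (-2:ℝ) 2) with hμ1
  set μ2 := volume.restrict (Set.uIoc (0:ℝ) h) with hμ2
  haveI i1 : IsFiniteMeasure μ1 :=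
    ⟨by rw [hμ1, Measure.restrict_apply_univ]; exact measure_Ioo_lt_top⟩
  haveI i2 : IsFiniteMeasure μ2 :=
    ⟨by rw [hμ2, Measure.restrict_apply_univ]; exact measure_Ioc_lt_top⟩
  have hK : Integrable (Function.uncurry fun y t : ℝ => (1 + (a * y + t) ^ 2)⁻¹)
      (μ1.prod μ2) := by
    refine ⟨Continuous.aestronglyMeasurable (by
      have : Continuous fun p : ℝ × ℝ => 1 + (a * p.1 + p.2) ^ 2 := by fun_prop
      exact this.inv₀ fun p => by positivity), ?_⟩
    refine HasFiniteIntegral.of_bounded (C := 1) (ae_of_all _ fun p => ?_)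
    rw [Function.uncurry, Real.norm_eq_abs, abs_of_nonneg (by positivity)]
    rw [inv_le_one_iff₀]
    right; nlinarith [sq_nonneg (a * p.1 + p.2)]
  have hG : Integrable (fun y => ∫ t, (1 + (a * y + t) ^ 2)⁻¹ ∂μ2) μ1 :=
    hK.integral_prod_left
  have step1 : (∫ y, |arctan (a * y + h) - arctan (a * y)| ∂μ1)
      ≤ ∫ y, (∫ t, (1 + (a * y + t) ^ 2)⁻¹ ∂μ2) ∂μ1 := by
    refine integral_mono_of_nonneg (ae_of_all _ fun y => abs_nonneg _) hG
      (ae_of_all _ fun y => ?_)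
    exact ptwise (a * y) h
  have step2 : (∫ y, (∫ t, (1 + (a * y + t) ^ 2)⁻¹ ∂μ2) ∂μ1)
      = ∫ t, (∫ y, (1 + (a * y + t) ^ 2)⁻¹ ∂μ1) ∂μ2 :=
    integral_integral_swap hK
  have step3 : (∫ t, (∫ y, (1 + (a * y + t) ^ 2)⁻¹ ∂μ1) ∂μ2)
      ≤ ∫ _t, π / a ∂μ2 := by
    refine integral_mono_of_nonneg (ae_of_all _ fun t =>
      integral_nonneg fun y => by positivity) (integrable_const _)
      (ae_of_all _ fun t => ?_)
    calc (∫ y, (1 + (a * y + t) ^ 2)⁻¹ ∂μ1)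
        ≤ ∫ y, (1 + (a * y + t) ^ 2)⁻¹ :=
          setIntegral_le_integral (cauchy_integrable a t ha.ne')
            (ae_of_all _ fun y => by positivity)
      _ = π / a := cauchy_int a t ha
  have step4 : (∫ _t, π / a ∂μ2) = π * |h| / a := by
    rw [integral_const, hμ2, measureReal_restrict_apply_univ, measureReal_def, Set.uIoc,
      Real.volume_Ioc, smul_eq_mul, ENNReal.toReal_ofReal (by
        simp [sub_nonneg, min_le_max]), max_sub_min_eq_abs, sub_zero]
    ring
  calc (∫ y in Set.Ioo (-2:ℝ) 2, |arctan (a * y + h) - arctan (a * y)|)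
      ≤ _ := step1
    _ = _ := step2
    _ ≤ _ := step3
    _ = π * |h| / a := step4

theorem coord_le_norm {k : ℕ} (x : EuclideanSpace ℝ (Fin k)) (i : Fin k) :
    |x i| ≤ ‖x‖ := by
  rw [EuclideanSpace.norm_eq]
  have h1 : |x i| = Real.sqrt (‖x i‖ ^ 2) := by
    rw [Real.sqrt_sq_eq_abs, Real.norm_eq_abs, abs_abs]
  rw [h1]
  refine Real.sqrt_le_sqrt ?_
  exact Finset.single_le_sum (f := fun j => ‖x j‖ ^ 2)
    (fun j _ => by positivity) (Finset.mem_univ i)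

theorem stmt16 (n : ℕ) (hn : 0 < n) :
    ∃ C : ℝ, 0 < C ∧ ∀ v w : EuclideanSpace ℝ (Fin n), ‖w‖ ≤ 1 / 4 →
      (∫ ξ in Metric.ball (0 : EuclideanSpace ℝ (Fin n)) 2 \
          Metric.ball (0 : EuclideanSpace ℝ (Fin n)) (1 / 2),
        |Real.arctan (inner ℝ v (ξ + w) : ℝ) - Real.arctan (inner ℝ v ξ : ℝ)|)
        ≤ C * ‖w‖ := by
  obtain ⟨m, rfl⟩ : ∃ m, n = m + 1 := ⟨n - 1, (Nat.succ_pred_eq_of_pos hn).symm⟩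
  refine ⟨π * 4 ^ m + 1, by positivity, fun v w hw => ?_⟩
  set S : Set (EuclideanSpace ℝ (Fin (m + 1))) :=
    Metric.ball (0 : EuclideanSpace ℝ (Fin (m + 1))) 2 \
      Metric.ball (0 : EuclideanSpace ℝ (Fin (m + 1))) (1 / 2) with hS
  have hCw : (0:ℝ) ≤ (π * 4 ^ m + 1) * ‖w‖ := by positivity
  by_cases hv : v = 0
  · subst hv
    simp only [inner_zero_left, sub_self, abs_zero, integral_zero]
    exact hCw
  -- setup
  set a : ℝ := ‖v‖ with haa
  have ha : 0 < a := norm_pos_iff.mpr hv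
  set h : ℝ := (inner ℝ v w : ℝ) with hh
  have hha : |h| ≤ a * ‖w‖ := abs_real_inner_le_norm v w
  set u : EuclideanSpace ℝ (Fin (m + 1)) := a⁻¹ • v with hu
  have hun : ‖u‖ = 1 := by
    rw [hu, norm_smul, norm_inv, norm_norm, ← haa, inv_mul_cancel₀ ha.ne']
  -- orthonormal basis with b 0 = u
  have hocard : Module.finrank ℝ (EuclideanSpace ℝ (Fin (m + 1))) = Fintype.card (Fin (m + 1)) := by
    simp [finrank_euclideanSpace]
  have ho : Orthonormal ℝ (({0} : Set (Fin (m + 1))).restrict fun _ => u) := by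
    refine ⟨fun i => hun, fun i j hij => absurd (Subsingleton.elim i j) hij⟩
  obtain ⟨b, hb⟩ := ho.exists_orthonormalBasis_extension_of_card_eq hocard
  have hb0 : b 0 = u := hb 0 rfl
  -- key coordinate formula
  have key : ∀ ξ : EuclideanSpace ℝ (Fin (m + 1)), (inner ℝ v ξ : ℝ) = a * b.repr ξ 0 := by
    intro ξ
    have hv' : v = a • u := by
      rw [hu, smul_smul, mul_inv_cancel₀ ha.ne', one_smul]
    rw [b.repr_apply_apply, hb0, hv', real_inner_smul_left]
  -- the 1-d profile
  set f : ℝ → ℝ := fun s => |Real.arctan (s + h) - Real.arctan s| with hf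
  have hf_cont : Continuous f := by
    apply Continuous.abs
    exact (Real.continuous_arctan.comp (continuous_id.add continuous_const)).sub
      Real.continuous_arctan
  have hf_nonneg : ∀ s, 0 ≤ f s := fun s => abs_nonneg _
  have hf_bdd : ∀ s, |f s| ≤ π := by
    intro s
    rw [abs_abs]
    have h1 := Real.arctan_lt_pi_div_two (s + h)
    have h2 := Real.neg_pi_div_two_lt_arctan (s + h)
    have h3 := Real.arctan_lt_pi_div_two s
    have h4 := Real.neg_pi_div_two_lt_arctan s
    rw [abs_sub_le_iff]
    constructor <;> linarith
  -- rewrite integrand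
  have hrw : (∫ ξ in S, |Real.arctan (inner ℝ v (ξ + w) : ℝ) - Real.arctan (inner ℝ v ξ : ℝ)|)
      = ∫ ξ in S, f (a * b.repr ξ 0) := by
    refine setIntegral_congr_fun (measurableSet_ball.diff measurableSet_ball) fun ξ _ => ?_
    rw [hf]
    simp only
    rw [← key ξ, inner_add_right, ← hh]
  -- step A: rotate
  have hT : MeasurePreserving (⇑b.repr) volume volume := b.measurePreserving_repr
  have hTemb : MeasurableEmbedding (⇑b.repr) :=
    b.repr.toHomeomorph.measurableEmbedding
  have hpre : (⇑b.repr) ⁻¹' S = S := by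
    ext ξ
    simp only [hS, Set.mem_preimage, Set.mem_diff, Metric.mem_ball,
      dist_zero_right, b.repr.norm_map]
  have stepA : (∫ ξ in S, f (a * b.repr ξ 0)) = ∫ x in S, f (a * x 0) := by
    have h0 := hT.setIntegral_preimage_emb hTemb (fun x => f (a * x 0)) S
    rw [hpre] at h0
    exact h0
  -- step B: to Pi space
  set en := (MeasurableEquiv.toLp 2 (Fin (m + 1) → ℝ)).symm with hen'
  have hen : MeasurePreserving en volume volume :=
    EuclideanSpace.volume_preserving_symm_measurableEquiv_toLp (Fin (m + 1))
  set cube1 : Set (Fin (m + 1) → ℝ) := Set.univ.pi fun _ => Set.Ioo (-2 : ℝ) 2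
    with hcube1
  set cube0 : Set (Fin m → ℝ) := Set.univ.pi fun _ => Set.Ioo (-2 : ℝ) 2
    with hcube0
  have stepB : (∫ x in S, f (a * x 0)) = ∫ y in en '' S, f (a * y 0) :=
    (hen.setIntegral_image_emb en.measurableEmbedding (fun y => f (a * y 0)) S).symm
  have hsub : en '' S ⊆ cube1 := by
    rintro y ⟨ξ, hξ, rfl⟩ i _
    have h1 : |ξ i| ≤ ‖ξ‖ := coord_le_norm ξ i
    have h2 : ‖ξ‖ < 2 := by
      have := hξ.1
      rwa [Metric.mem_ball, dist_zero_right] at this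
    have h3 := abs_lt.mp (lt_of_le_of_lt h1 h2)
    exact ⟨h3.1, h3.2⟩
  have hcube1vol : volume cube1 ≠ ⊤ := by
    rw [hcube1, volume_pi_pi]
    simp [Real.volume_Ioo]
  have hint_cube : IntegrableOn (fun y : Fin (m + 1) → ℝ => f (a * y 0)) cube1 := by
    refine Measure.integrableOn_of_bounded (M := π) hcube1vol ?_ (ae_of_all _ fun y => ?_)
    · exact (hf_cont.comp (continuous_const.mul (continuous_apply 0))).aestronglyMeasurable
    · exact hf_bdd _
  have stepC : (∫ y in en '' S, f (a * y 0)) ≤ ∫ y in cube1, f (a * y 0) :=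
    setIntegral_mono_set hint_cube (ae_of_all _ fun y => hf_nonneg _)
      (HasSubset.Subset.eventuallyLE hsub)
  -- step D: split off the first coordinate
  set e := MeasurableEquiv.piFinSuccAbove (fun _ : Fin (m + 1) => ℝ) 0 with he'
  have hep : MeasurePreserving e volume volume :=
    volume_preserving_piFinSuccAbove (fun _ : Fin (m + 1) => ℝ) 0
  have hpre2 : e ⁻¹' (Set.Ioo (-2 : ℝ) 2 ×ˢ cube0) = cube1 := by
    ext x
    simp only [Set.mem_preimage, Set.mem_prod, hcube1, hcube0, Set.mem_pi,
      Set.mem_univ, true_implies, he', MeasurableEquiv.piFinSuccAbove_apply]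
    constructor
    · rintro ⟨h1, h2⟩ i
      induction i using Fin.cases with
      | zero => exact h1
      | succ j =>
        have h3 : x ((0 : Fin (m + 1)).succAbove j) ∈ Set.Ioo (-2 : ℝ) 2 := h2 j
        rwa [Fin.succAbove_zero] at h3
    · intro hx
      refine ⟨hx 0, fun j => ?_⟩
      show x ((0 : Fin (m + 1)).succAbove j) ∈ Set.Ioo (-2 : ℝ) 2
      rw [Fin.succAbove_zero]
      exact hx j.succ
  have stepD : (∫ y in cube1, f (a * y 0))
      = ∫ p in Set.Ioo (-2 : ℝ) 2 ×ˢ cube0, f (a * p.1) := by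
    have h0 := hep.setIntegral_preimage_emb e.measurableEmbedding
      (fun p => f (a * p.1)) (Set.Ioo (-2 : ℝ) 2 ×ˢ cube0)
    rw [hpre2] at h0
    exact h0
  -- step E: product integral
  have stepE : (∫ p in Set.Ioo (-2 : ℝ) 2 ×ˢ cube0, f (a * p.1))
      = (∫ y in Set.Ioo (-2 : ℝ) 2, f (a * y)) * ∫ _x in cube0, (1 : ℝ) := by
    rw [Measure.volume_eq_prod, ← setIntegral_prod_mul (fun y => f (a * y))
      (fun _ => (1 : ℝ))]
    simp only [mul_one]
  have hcube0vol : (∫ _x in cube0, (1 : ℝ)) = 4 ^ m := by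
    rw [setIntegral_const, smul_eq_mul, mul_one, measureReal_def, hcube0, volume_pi_pi]
    simp only [Real.volume_Ioo, Finset.prod_const, Finset.card_univ, Fintype.card_fin]
    norm_num
  -- final estimates
  have h1d : (∫ y in Set.Ioo (-2 : ℝ) 2, f (a * y)) ≤ π * |h| / a := oneD a h ha
  have hfinal : (∫ y in Set.Ioo (-2 : ℝ) 2, f (a * y)) * ∫ _x in cube0, (1 : ℝ)
      ≤ (π * 4 ^ m + 1) * ‖w‖ := by
    rw [hcube0vol]
    have h2 : π * |h| / a ≤ π * ‖w‖ := by
      rw [div_le_iff₀ ha]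
      nlinarith [Real.pi_pos, hha, ha]
    have h3 : (∫ y in Set.Ioo (-2 : ℝ) 2, f (a * y)) ≤ π * ‖w‖ := h1d.trans h2
    have h4 : (0:ℝ) ≤ 4 ^ m := by positivity
    nlinarith [norm_nonneg w, Real.pi_pos]
  calc (∫ ξ in S, |Real.arctan (inner ℝ v (ξ + w) : ℝ) - Real.arctan (inner ℝ v ξ : ℝ)|)
      = ∫ ξ in S, f (a * b.repr ξ 0) := hrw
    _ = ∫ x in S, f (a * x 0) := stepA
    _ = ∫ y in en '' S, f (a * y 0) := stepB
    _ ≤ ∫ y in cube1, f (a * y 0) := stepC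
    _ = ∫ p in Set.Ioo (-2 : ℝ) 2 ×ˢ cube0, f (a * p.1) := stepD
    _ = (∫ y in Set.Ioo (-2 : ℝ) 2, f (a * y)) * ∫ _x in cube0, (1 : ℝ) := stepE
    _ ≤ (π * 4 ^ m + 1) * ‖w‖ := hfinal
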